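/- Supermartingale decomposition with irregular terminal value (abstract core of Proposition A.1): let χ and g be integrable 𝓕_T-measurable real random variables and let f : [0,T] × Ω → ℝ be jointly measurable with E[∫₀^T |f_r| dr] < ∞. Define, for s ∈ [0,T], ξ_s := E[ χ + ∫_s^T f_r dr | 𝓕_s ]·1_{s<T} + g·1_{s=T}. Then there exist two nonnegative supermartingales (H_s)_{s∈[0,T]} and (H'_s)_{s∈[0,T]} with respect to (𝓕_s) such that for every s ∈ [0,T], ξ_s = H_s − H'_s almost surely. -/

import Mathlib

open MeasureTheory Filter Set

/-- The process `I_s := E[χ + ∫_s^T f_r dr | 𝓕_s]`. -/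
noncomputable def runningCondExp {Ω : Type*} {m : MeasurableSpace Ω} (μ : Measure Ω)
    (ℱ : Filtration ℝ m) (T : ℝ) (χ : Ω → ℝ) (f : ℝ → Ω → ℝ) (s : ℝ) : Ω → ℝ :=
  μ[fun ω => χ ω + ∫ r in s..T, f r ω | ℱ s]

/-- A nonnegative supermartingale on `[0,T]` with respect to the filtration `ℱ`:
each `M s` is `ℱ s`-measurable, integrable, nonnegative a.s., and
`E[M t | ℱ s] ≤ M s` a.s. for `0 ≤ s ≤ t ≤ T`. -/
def IsNonnegSupermartingaleOn {Ω : Type*} {m : MeasurableSpace Ω} (μ : Measure Ω)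
    (ℱ : Filtration ℝ m) (T : ℝ) (M : ℝ → Ω → ℝ) : Prop :=
  (∀ s ∈ Icc (0 : ℝ) T,
      StronglyMeasurable[ℱ s] (M s) ∧ Integrable (M s) μ ∧ (∀ᵐ ω ∂μ, 0 ≤ M s ω))
    ∧ ∀ s t : ℝ, 0 ≤ s → s ≤ t → t ≤ T → μ[M t | ℱ s] ≤ᵐ[μ] M s

/-- Helper: integrability in `ω` of the interval integral of a product-integrable kernel. -/
lemma integrable_intervalIntegral_aux {Ω : Type*} {m : MeasurableSpace Ω} (μ : Measure Ω)
    [SFinite μ] (T : ℝ) (φ : ℝ → Ω → ℝ)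
    (hφint : Integrable (Function.uncurry φ) ((volume.restrict (Icc 0 T)).prod μ))
    (s : ℝ) (hs : 0 ≤ s) (hsT : s ≤ T) :
    Integrable (fun ω => ∫ r in s..T, φ r ω) μ := by
  have hrestrict : (volume.restrict (Icc 0 T)).restrict (Ioc s T) = volume.restrict (Ioc s T) := by
    rw [Measure.restrict_restrict measurableSet_Ioc,
      Set.inter_eq_left.mpr (Ioc_subset_Icc_self.trans (Icc_subset_Icc_left hs))]
  have hpoint : ∀ ω, (∫ r in s..T, φ r ω)
      = ∫ r, ((Ioc s T ×ˢ (univ : Set Ω)).indicator (Function.uncurry φ)) (r, ω)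
          ∂(volume.restrict (Icc 0 T)) := by
    intro ω
    rw [intervalIntegral.integral_of_le hsT, ← hrestrict,
      ← integral_indicator measurableSet_Ioc]
    refine integral_congr_ae (Eventually.of_forall fun r => ?_)
    by_cases hr : r ∈ Ioc s T <;>
      simp [Set.indicator_apply, hr, Function.uncurry]
  have hind : Integrable ((Ioc s T ×ˢ (univ : Set Ω)).indicator (Function.uncurry φ))
      ((volume.restrict (Icc 0 T)).prod μ) :=
    hφint.indicator (measurableSet_Ioc.prod MeasurableSet.univ)
  exact hind.integral_prod_right.congr (Eventually.of_forall fun ω => (hpoint ω).symm)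

/-- Helper: the process `s ↦ E[a + ∫_s^T φ_r dr | ℱ s]` (with terminal value `b`)
is a nonnegative supermartingale. -/
lemma helper_supermartingale {Ω : Type*} {m : MeasurableSpace Ω} (μ : Measure Ω)
    [IsProbabilityMeasure μ] (T : ℝ) (ℱ : Filtration ℝ m)
    (a : Ω → ℝ) (haint : Integrable a μ)
    (b : Ω → ℝ) (hbmeas : StronglyMeasurable[ℱ T] b) (hbint : Integrable b μ)
    (hb0 : ∀ ω, 0 ≤ b ω) (hba : ∀ ω, b ω ≤ a ω)
    (φ : ℝ → Ω → ℝ) (hφ0 : ∀ r ω, 0 ≤ φ r ω)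
    (hφint : Integrable (Function.uncurry φ) ((volume.restrict (Icc 0 T)).prod μ)) :
    IsNonnegSupermartingaleOn μ ℱ T
      (fun s => if s < T then μ[fun ω => a ω + ∫ r in s..T, φ r ω | ℱ s] else b) := by
  set K : ℝ → Ω → ℝ := fun s ω => a ω + ∫ r in s..T, φ r ω with hK
  have hKint : ∀ s, 0 ≤ s → s ≤ T → Integrable (K s) μ := fun s hs hsT =>
    haint.add (integrable_intervalIntegral_aux μ T φ hφint s hs hsT)
  have hsec : ∀ᵐ ω ∂μ, Integrable (fun r => φ r ω) (volume.restrict (Icc 0 T)) :=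
    hφint.prod_left_ae
  -- pointwise lower bound `b ≤ K s`
  have hbK : ∀ s, s ≤ T → ∀ ω, b ω ≤ K s ω := by
    intro s hsT ω
    have h0 : (0:ℝ) ≤ ∫ r in s..T, φ r ω :=
      intervalIntegral.integral_nonneg hsT fun u _ => hφ0 u ω
    have := hba ω
    simp only [hK]
    linarith
  -- a.e. monotonicity `K t ≤ K s` for `0 ≤ s ≤ t ≤ T`
  have hmono : ∀ s t, 0 ≤ s → s ≤ t → t ≤ T → (K t) ≤ᵐ[μ] (K s) := by
    intro s t hs hst htT
    filter_upwards [hsec] with ω hω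
    have hint : ∀ u v, 0 ≤ u → u ≤ v → v ≤ T →
        IntervalIntegrable (fun r => φ r ω) volume u v := by
      intro u v hu huv hvT
      have hω' : IntegrableOn (fun r => φ r ω) (Icc 0 T) volume := hω
      have : IntegrableOn (fun r => φ r ω) (Ioc u v) volume :=
        hω'.mono_set (Ioc_subset_Icc_self.trans (Icc_subset_Icc hu hvT))
      exact (intervalIntegrable_iff_integrableOn_Ioc_of_le huv).mpr this
    have hadd : (∫ r in s..t, φ r ω) + (∫ r in t..T, φ r ω) = ∫ r in s..T, φ r ω :=
      intervalIntegral.integral_add_adjacent_intervals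
        (hint s t hs hst htT) (hint t T (hs.trans hst) htT le_rfl)
    have h0 : (0:ℝ) ≤ ∫ r in s..t, φ r ω :=
      intervalIntegral.integral_nonneg hst fun u _ => hφ0 u ω
    simp only [hK]
    linarith
  constructor
  · intro s hs
    by_cases hsT : s < T
    · simp only [if_pos hsT]
      exact ⟨stronglyMeasurable_condExp, integrable_condExp,
        condExp_nonneg (Eventually.of_forall fun ω =>
          (hb0 ω).trans (hbK s hs.2 ω))⟩
    · simp only [if_neg hsT]
      have hsT'' : s = T := le_antisymm hs.2 (not_lt.mp hsT)
      subst hsT''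
      exact ⟨hbmeas, hbint, Eventually.of_forall hb0⟩
  · intro s t hs hst htT
    by_cases htT' : t < T
    · have hsT' : s < T := lt_of_le_of_lt hst htT'
      simp only [if_pos hsT', if_pos htT']
      calc μ[μ[K t | ℱ t] | ℱ s] =ᵐ[μ] μ[K t | ℱ s] :=
             condExp_condExp_of_le (ℱ.mono hst) (ℱ.le t)
        _ ≤ᵐ[μ] μ[K s | ℱ s] :=
             condExp_mono (hKint t (hs.trans hst) htT) (hKint s hs (hst.trans htT))
               (hmono s t hs hst htT)
    · -- t = T
      simp only [if_neg htT']
      by_cases hsT : s < T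
      · simp only [if_pos hsT]
        exact condExp_mono hbint (hKint s hs (hst.trans htT))
          (Eventually.of_forall (hbK s (hst.trans htT)))
      · simp only [if_neg hsT]
        have hsT'' : s = T := le_antisymm (hst.trans htT) (not_lt.mp hsT)
        subst hsT''
        rw [condExp_of_stronglyMeasurable (ℱ.le s) hbmeas hbint]

/-- Supermartingale decomposition with irregular terminal value: the process
`ξ_s := E[χ + ∫_s^T f_r dr | 𝓕_s]·1_{s<T} + g·1_{s=T}` can be written, for every
`s ∈ [0,T]`, as the a.s. difference of two nonnegative supermartingales. -/
theorem supermartingale_decomposition_irregular_terminal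
    {Ω : Type*} {m : MeasurableSpace Ω} (μ : Measure Ω) [IsProbabilityMeasure μ]
    (T : ℝ) (hT : 0 < T) (ℱ : Filtration ℝ m)
    (χ : Ω → ℝ) (hχmeas : StronglyMeasurable[ℱ T] χ) (hχint : Integrable χ μ)
    (g : Ω → ℝ) (hgmeas : StronglyMeasurable[ℱ T] g) (hgint : Integrable g μ)
    (f : ℝ → Ω → ℝ) (hfmeas : Measurable (Function.uncurry f))
    (hfint : Integrable (Function.uncurry f) ((volume.restrict (Icc 0 T)).prod μ)) :
    ∃ H H' : ℝ → Ω → ℝ,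
      IsNonnegSupermartingaleOn μ ℱ T H ∧ IsNonnegSupermartingaleOn μ ℱ T H' ∧
      ∀ s ∈ Icc (0 : ℝ) T,
        ∀ᵐ ω ∂μ,
          (if s < T then runningCondExp μ ℱ T χ f s ω else g ω) = H s ω - H' s ω := by
  -- positive and negative parts
  set a₁ : Ω → ℝ := fun ω => max (χ ω) 0 + |g ω| with ha₁
  set a₂ : Ω → ℝ := fun ω => max (-χ ω) 0 + |g ω| with ha₂
  set b₁ : Ω → ℝ := fun ω => max (g ω) 0 with hb₁
  set b₂ : Ω → ℝ := fun ω => max (-g ω) 0 with hb₂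
  set φ₁ : ℝ → Ω → ℝ := fun r ω => max (f r ω) 0 with hφ₁
  set φ₂ : ℝ → Ω → ℝ := fun r ω => max (-f r ω) 0 with hφ₂
  have hφ₁u : Function.uncurry φ₁ = fun p => max (Function.uncurry f p) 0 := rfl
  have hφ₂u : Function.uncurry φ₂ = fun p => max (-(Function.uncurry f p)) 0 := rfl
  have hφ₁int : Integrable (Function.uncurry φ₁) ((volume.restrict (Icc 0 T)).prod μ) := by
    rw [hφ₁u]; exact hfint.pos_part
  have hφ₂int : Integrable (Function.uncurry φ₂) ((volume.restrict (Icc 0 T)).prod μ) := by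
    rw [hφ₂u]; exact hfint.neg_part
  have ha₁int : Integrable a₁ μ := hχint.pos_part.add hgint.abs
  have ha₂int : Integrable a₂ μ := hχint.neg_part.add hgint.abs
  have hb₁meas : StronglyMeasurable[ℱ T] b₁ := by
    letI : MeasurableSpace Ω := ℱ T
    exact hgmeas.sup stronglyMeasurable_const
  have hb₂meas : StronglyMeasurable[ℱ T] b₂ := by
    letI : MeasurableSpace Ω := ℱ T
    exact hgmeas.neg.sup stronglyMeasurable_const
  have hb₁int : Integrable b₁ μ := hgint.pos_part
  have hb₂int : Integrable b₂ μ := hgint.neg_part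
  have hba₁ : ∀ ω, b₁ ω ≤ a₁ ω := fun ω => by
    simp only [ha₁, hb₁]
    have h1 : max (g ω) 0 ≤ |g ω| := max_le (le_abs_self _) (abs_nonneg _)
    have h2 : (0:ℝ) ≤ max (χ ω) 0 := le_max_right _ _
    linarith
  have hba₂ : ∀ ω, b₂ ω ≤ a₂ ω := fun ω => by
    simp only [ha₂, hb₂]
    have h1 : max (-g ω) 0 ≤ |g ω| := max_le (neg_le_abs _) (abs_nonneg _)
    have h2 : (0:ℝ) ≤ max (-χ ω) 0 := le_max_right _ _
    linarith
  refine ⟨fun s => if s < T then μ[fun ω => a₁ ω + ∫ r in s..T, φ₁ r ω | ℱ s] else b₁,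
    fun s => if s < T then μ[fun ω => a₂ ω + ∫ r in s..T, φ₂ r ω | ℱ s] else b₂,
    helper_supermartingale μ T ℱ a₁ ha₁int b₁ hb₁meas hb₁int
      (fun ω => le_max_right _ _) hba₁ φ₁ (fun r ω => le_max_right _ _) hφ₁int,
    helper_supermartingale μ T ℱ a₂ ha₂int b₂ hb₂meas hb₂int
      (fun ω => le_max_right _ _) hba₂ φ₂ (fun r ω => le_max_right _ _) hφ₂int, ?_⟩
  intro s hsmem
  by_cases hsT : s < T
  · simp only [if_pos hsT]
    have hK₁int : Integrable (fun ω => a₁ ω + ∫ r in s..T, φ₁ r ω) μ :=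
      ha₁int.add (integrable_intervalIntegral_aux μ T φ₁ hφ₁int s hsmem.1 hsmem.2)
    have hK₂int : Integrable (fun ω => a₂ ω + ∫ r in s..T, φ₂ r ω) μ :=
      ha₂int.add (integrable_intervalIntegral_aux μ T φ₂ hφ₂int s hsmem.1 hsmem.2)
    have hsec : ∀ᵐ ω ∂μ, Integrable (fun r => f r ω) (volume.restrict (Icc 0 T)) :=
      hfint.prod_left_ae
    have hdiff : (fun ω => (a₁ ω + ∫ r in s..T, φ₁ r ω) - (a₂ ω + ∫ r in s..T, φ₂ r ω))
        =ᵐ[μ] (fun ω => χ ω + ∫ r in s..T, f r ω) := by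
      filter_upwards [hsec] with ω hω
      have hω' : IntegrableOn (fun r => f r ω) (Icc 0 T) volume := hω
      have hi : IntegrableOn (fun r => f r ω) (Ioc s T) volume :=
        hω'.mono_set (Ioc_subset_Icc_self.trans (Icc_subset_Icc_left hsmem.1))
      have hii : IntervalIntegrable (fun r => f r ω) volume s T :=
        (intervalIntegrable_iff_integrableOn_Ioc_of_le hsmem.2).mpr hi
      have hii₁ : IntervalIntegrable (fun r => φ₁ r ω) volume s T :=
        (intervalIntegrable_iff_integrableOn_Ioc_of_le hsmem.2).mpr hi.pos_part
      have hii₂ : IntervalIntegrable (fun r => φ₂ r ω) volume s T :=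
        (intervalIntegrable_iff_integrableOn_Ioc_of_le hsmem.2).mpr hi.neg.pos_part
      have hsub : (∫ r in s..T, φ₁ r ω) - (∫ r in s..T, φ₂ r ω)
          = ∫ r in s..T, f r ω := by
        rw [← intervalIntegral.integral_sub hii₁ hii₂]
        simp [hφ₁, hφ₂, max_zero_sub_max_neg_zero_eq_self]
      have hχeq : a₁ ω - a₂ ω = χ ω := by
        simp only [ha₁, ha₂]
        have := max_zero_sub_max_neg_zero_eq_self (χ ω)
        linarith
      linarith
    calc runningCondExp μ ℱ T χ f s
        =ᵐ[μ] μ[(fun ω => (a₁ ω + ∫ r in s..T, φ₁ r ω) - (a₂ ω + ∫ r in s..T, φ₂ r ω)) | ℱ s] :=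
          (condExp_congr_ae hdiff).symm
      _ =ᵐ[μ] μ[fun ω => a₁ ω + ∫ r in s..T, φ₁ r ω | ℱ s]
            - μ[fun ω => a₂ ω + ∫ r in s..T, φ₂ r ω | ℱ s] :=
          condExp_sub hK₁int hK₂int (ℱ s)
      _ =ᵐ[μ] fun ω => (μ[fun ω => a₁ ω + ∫ r in s..T, φ₁ r ω | ℱ s]) ω
            - (μ[fun ω => a₂ ω + ∫ r in s..T, φ₂ r ω | ℱ s]) ω :=
          Eventually.of_forall fun ω => rfl
  · simp only [if_neg hsT]
    refine Eventually.of_forall fun ω => ?_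
    simp only [hb₁, hb₂]
    exact (max_zero_sub_max_neg_zero_eq_self (g ω)).symm
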